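/- Let F be a finite family of finite sets. If an ordering (S_1, ..., S_n) of F satisfies the running intersection property, then a join tree for F exists: a tree whose vertex set is F such that for every pair of vertices X_1, X_2 in the tree, every vertex on the path between X_1 and X_2 contains X_1 ∩ X_2. -/

import Mathlib

/-- `S` is a running intersection ordering: for every index `a ≥ 1` there is an earlier
index `b` such that `S a ∩ (⋃_{c < a} S c) ⊆ S b`. -/
def IsRIO {α : Type*} [DecidableEq α] {n : ℕ} (S : Fin n → Finset α) : Prop :=
  ∀ a : Fin n, 0 < (a : ℕ) → ∃ b : Fin n, (b : ℕ) < (a : ℕ) ∧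
    S a ∩ (Finset.univ.filter (fun c : Fin n => (c : ℕ) < (a : ℕ))).biUnion S ⊆ S b

/-- `T` is a join tree for the family `F`: a tree on vertex set `F` such that every
vertex on a path between `X₁` and `X₂` contains `X₁ ∩ X₂`. -/
def IsJoinTree {α : Type*} [DecidableEq α] (F : Finset (Finset α))
    (T : SimpleGraph {X // X ∈ F}) : Prop :=
  T.IsTree ∧ ∀ (X₁ X₂ : {X // X ∈ F}) (p : T.Walk X₁ X₂), p.IsPath →
    ∀ Z ∈ p.support, (X₁ : Finset α) ∩ (X₂ : Finset α) ⊆ (Z : Finset α)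

section Aux

open SimpleGraph

variable {α : Type*} [DecidableEq α] {n : ℕ} {S : Fin n → Finset α}

/-- The parent of an index `a` in the running intersection ordering. -/
noncomputable def rioPar (hrip : IsRIO S) (a : Fin n) : Fin n :=
  if h : 0 < (a : ℕ) then (hrip a h).choose else a

lemma rioPar_lt (hrip : IsRIO S) {a : Fin n} (h : 0 < (a : ℕ)) :
    ((rioPar hrip a : Fin n) : ℕ) < (a : ℕ) := by
  rw [rioPar, dif_pos h]; exact (hrip a h).choose_spec.1

lemma rioPar_mem (hrip : IsRIO S) {a c : Fin n} {x : α} (hx : x ∈ S a) (hc : x ∈ S c)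
    (hca : (c : ℕ) < (a : ℕ)) : x ∈ S (rioPar hrip a) := by
  have h : 0 < (a : ℕ) := lt_of_le_of_lt (Nat.zero_le _) hca
  rw [rioPar, dif_pos h]
  apply (hrip a h).choose_spec.2
  refine Finset.mem_inter.2 ⟨hx, Finset.mem_biUnion.2 ⟨c, ?_, hc⟩⟩
  simp only [Finset.mem_filter, Finset.mem_univ, true_and]
  exact hca

/-- The graph on `Fin n` connecting each index with its parent. -/
noncomputable def rioGraph (hrip : IsRIO S) : SimpleGraph (Fin n) :=
  SimpleGraph.fromRel (fun a b => a = rioPar hrip b)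

lemma rioGraph_adj (hrip : IsRIO S) {a b : Fin n} :
    (rioGraph hrip).Adj a b ↔ a ≠ b ∧ (a = rioPar hrip b ∨ b = rioPar hrip a) := by
  rw [rioGraph, SimpleGraph.fromRel_adj]

lemma rioGraph_adj_par (hrip : IsRIO S) {a : Fin n} (h : 0 < (a : ℕ)) :
    (rioGraph hrip).Adj a (rioPar hrip a) := by
  rw [rioGraph_adj]
  refine ⟨fun he => ?_, Or.inr rfl⟩
  · have := rioPar_lt hrip h
    rw [← he] at this
    exact lt_irrefl _ this

lemma rioGraph_adj_down (hrip : IsRIO S) {a b : Fin n}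
    (hadj : (rioGraph hrip).Adj a b) (hba : (b : ℕ) < (a : ℕ)) : b = rioPar hrip a := by
  rw [rioGraph_adj] at hadj
  rcases hadj.2 with h | h
  · exfalso
    by_cases hb : 0 < (b : ℕ)
    · have := rioPar_lt hrip hb
      rw [← h] at this
      omega
    · have hb0 : (b : ℕ) = 0 := by omega
      rw [rioPar, dif_neg (by omega)] at h
      exact hadj.1 h
  · exact h

lemma rioGraph_reachable (hrip : IsRIO S) (hn : 0 < n) :
    ∀ k : ℕ, ∀ a : Fin n, (a : ℕ) = k → (rioGraph hrip).Reachable a ⟨0, hn⟩ := by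
  intro k
  induction k using Nat.strong_induction_on with
  | _ k ih =>
    intro a hak
    rcases Nat.eq_zero_or_pos (a : ℕ) with h0 | hpos
    · have : a = ⟨0, hn⟩ := Fin.ext h0
      rw [this]
    · have hadj := rioGraph_adj_par hrip hpos
      have hlt := rioPar_lt hrip hpos
      exact hadj.reachable.trans (ih _ (by omega) _ rfl)

lemma rioGraph_connected (hrip : IsRIO S) (hn : 0 < n) : (rioGraph hrip).Connected := by
  have : Nonempty (Fin n) := ⟨⟨0, hn⟩⟩
  refine ⟨fun a b => ?_⟩
  exact (rioGraph_reachable hrip hn _ a rfl).trans (rioGraph_reachable hrip hn _ b rfl).symm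

lemma rioGraph_isAcyclic (hrip : IsRIO S) : (rioGraph hrip).IsAcyclic := by
  intro v c hc
  classical
  -- pick a maximal vertex of the cycle
  obtain ⟨a, ha, hmax⟩ := Finset.exists_max_image c.support.toFinset (fun z : Fin n => (z : ℕ))
    ⟨v, by simp⟩
  rw [List.mem_toFinset] at ha
  have hmax' : ∀ y ∈ c.support, (y : ℕ) ≤ (a : ℕ) := fun y hy =>
    hmax y (List.mem_toFinset.2 hy)
  have hc' := hc.rotate ha
  set c' : (rioGraph hrip).Walk a a := c.rotate a ha with hc'def
  have hsupp : ∀ y, y ∈ c'.support → y ∈ c.support := by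
    intro y hy
    have hrot := SimpleGraph.Walk.support_rotate c a ha
    rw [c'.support_eq_cons] at hy
    rcases List.mem_cons.1 hy with rfl | hy'
    · exact ha
    · have : y ∈ c.support.tail := hrot.mem_iff.1 hy'
      exact List.mem_of_mem_tail this
  -- destructure the cycle
  cases hcc : c' with
  | nil => rw [hcc] at hc'; exact hc'.ne_nil rfl
  | @cons _ b _ hab q =>
    rw [hcc] at hc'
    have hbsupp : b ∈ c.support := by
      apply hsupp; rw [hcc]; simp [SimpleGraph.Walk.support_cons]
    have hbne : b ≠ a := fun h => (rioGraph hrip).irrefl (h ▸ hab)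
    have hblt : (b : ℕ) < (a : ℕ) :=
      lt_of_le_of_ne (hmax' b hbsupp) (fun h => hbne (Fin.ext h))
    have hbpar : b = rioPar hrip a := rioGraph_adj_down hrip hab hblt
    -- the walk q : Walk b a ends at a; look at its last edge via reverse
    have hqrev : ¬ q.reverse.Nil := SimpleGraph.Walk.not_nil_of_ne hbne.symm
    obtain ⟨d, had, q'', hq''⟩ := SimpleGraph.Walk.not_nil_iff.1 hqrev
    have hdq : d ∈ q.support := by
      have : d ∈ q.reverse.support := by rw [hq'']; simp
      rwa [SimpleGraph.Walk.support_reverse, List.mem_reverse] at this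
    have hdsupp : d ∈ c.support := by
      apply hsupp; rw [hcc]
      rw [SimpleGraph.Walk.support_cons]
      exact List.mem_cons_of_mem _ hdq
    have hdne : d ≠ a := fun h => (rioGraph hrip).irrefl (h ▸ had)
    have hdlt : (d : ℕ) < (a : ℕ) :=
      lt_of_le_of_ne (hmax' d hdsupp) (fun h => hdne (Fin.ext h))
    have hdpar : d = rioPar hrip a := rioGraph_adj_down hrip had hdlt
    -- edge contradiction
    have hnodup : (SimpleGraph.Walk.cons hab q).edges.Nodup := hc'.edges_nodup
    simp only [SimpleGraph.Walk.edges_cons, List.nodup_cons] at hnodup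
    apply hnodup.1
    have : s(a, d) ∈ q.reverse.edges := by
      rw [hq'']; simp
    rw [SimpleGraph.Walk.edges_reverse, List.mem_reverse] at this
    have hbd : b = d := hbpar.trans hdpar.symm
    rw [← hbd] at this
    exact this

/-- A walk inside the set of vertices containing `x`, from any such vertex down to
the minimal such vertex. -/
lemma rioWalk (hrip : IsRIO S) {x : α} {m : Fin n} (hm : x ∈ S m)
    (hmin : ∀ c : Fin n, x ∈ S c → (m : ℕ) ≤ (c : ℕ)) :
    ∀ k : ℕ, ∀ a : Fin n, (a : ℕ) = k → x ∈ S a →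
      ∃ w : (rioGraph hrip).Walk a m, ∀ z ∈ w.support, x ∈ S z := by
  intro k
  induction k using Nat.strong_induction_on with
  | _ k ih =>
    intro a hak hxa
    by_cases ham : a = m
    · subst ham
      exact ⟨SimpleGraph.Walk.nil, by simp [hxa]⟩
    · have hma : (m : ℕ) < (a : ℕ) :=
        lt_of_le_of_ne (hmin a hxa) (fun h => ham (Fin.ext h.symm))
      have hpar : x ∈ S (rioPar hrip a) := rioPar_mem hrip hxa hm hma
      have hpos : 0 < (a : ℕ) := lt_of_le_of_lt (Nat.zero_le _) hma
      have hlt := rioPar_lt hrip hpos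
      obtain ⟨w, hw⟩ := ih _ (by omega) _ rfl hpar
      refine ⟨SimpleGraph.Walk.cons (rioGraph_adj_par hrip hpos) w, ?_⟩
      intro z hz
      rw [SimpleGraph.Walk.support_cons] at hz
      rcases List.mem_cons.1 hz with rfl | hz
      · exact hxa
      · exact hw z hz

end Aux

/-- If an ordering of the finite family `F` of finite sets satisfies the running
intersection property, then a join tree for `F` exists. -/
theorem stmt0 {α : Type*} [DecidableEq α] (F : Finset (Finset α)) {n : ℕ} (hn : 0 < n)
    (S : Fin n → Finset α) (hinj : Function.Injective S)
    (hrange : Finset.image S Finset.univ = F) (hrip : IsRIO S) :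
    ∃ T : SimpleGraph {X // X ∈ F}, IsJoinTree F T := by
  classical
  have hmem : ∀ a : Fin n, S a ∈ F := fun a => by
    rw [← hrange]; exact Finset.mem_image_of_mem S (Finset.mem_univ a)
  let f : Fin n → {X // X ∈ F} := fun a => ⟨S a, hmem a⟩
  have hfbij : Function.Bijective f := by
    constructor
    · intro a b hab
      exact hinj (congrArg Subtype.val hab)
    · rintro ⟨X, hX⟩
      rw [← hrange] at hX
      obtain ⟨a, _, ha⟩ := Finset.mem_image.1 hX
      exact ⟨a, Subtype.ext ha⟩
  let e : Fin n ≃ {X // X ∈ F} := Equiv.ofBijective f hfbij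
  have hval : ∀ X : {X // X ∈ F}, (X : Finset α) = S (e.symm X) := by
    intro X
    conv_lhs => rw [← e.apply_symm_apply X]
    rfl
  let G0 := rioGraph hrip
  let G : SimpleGraph {X // X ∈ F} :=
    { Adj := fun X Y => G0.Adj (e.symm X) (e.symm Y)
      symm := ⟨fun X Y h => h.symm⟩
      loopless := ⟨fun X h => G0.irrefl h⟩ }
  have hGadj : ∀ X Y, G.Adj X Y ↔ G0.Adj (e.symm X) (e.symm Y) := fun _ _ => Iff.rfl
  let φ : G0 ≃g G :=
    { toEquiv := e
      map_rel_iff' := by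
        intro a b
        show G0.Adj (e.symm (e a)) (e.symm (e b)) ↔ G0.Adj a b
        rw [e.symm_apply_apply, e.symm_apply_apply] }
  have hGacyclic : G.IsAcyclic := by
    intro v c hc
    have hc0 : (c.map φ.symm.toHom).IsCycle :=
      (SimpleGraph.Walk.map_isCycle_iff_of_injective φ.symm.toEquiv.injective).2 hc
    exact rioGraph_isAcyclic hrip _ hc0
  have hGconn : G.Connected :=
    SimpleGraph.Connected.map φ.toHom φ.toEquiv.surjective (rioGraph_connected hrip hn)
  refine ⟨G, ⟨⟨hGconn, hGacyclic⟩, ?_⟩⟩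
  intro X₁ X₂ p hp Z hZ x hx
  rw [Finset.mem_inter, hval X₁, hval X₂] at hx
  obtain ⟨hx1, hx2⟩ := hx
  -- the minimal index whose set contains x
  obtain ⟨m, hm, hmmin⟩ := Finset.exists_min_image
    (Finset.univ.filter (fun c : Fin n => x ∈ S c)) (fun z : Fin n => (z : ℕ))
    ⟨e.symm X₁, by simp [hx1]⟩
  rw [Finset.mem_filter] at hm
  have hmmin' : ∀ c : Fin n, x ∈ S c → (m : ℕ) ≤ (c : ℕ) := fun c hc =>
    hmmin c (Finset.mem_filter.2 ⟨Finset.mem_univ c, hc⟩)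
  obtain ⟨w1, hw1⟩ := rioWalk hrip hm.2 hmmin' _ (e.symm X₁) rfl hx1
  obtain ⟨w2, hw2⟩ := rioWalk hrip hm.2 hmmin' _ (e.symm X₂) rfl hx2
  have hwsupp : ∀ z ∈ (w1.append w2.reverse).support, x ∈ S z := by
    intro z hz
    rw [SimpleGraph.Walk.mem_support_append_iff] at hz
    rcases hz with hz | hz
    · exact hw1 z hz
    · rw [SimpleGraph.Walk.support_reverse, List.mem_reverse] at hz
      exact hw2 z hz
  have hwb : (w1.append w2.reverse).bypass.IsPath := SimpleGraph.Walk.bypass_isPath _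
  -- the mapped path
  let q : G0.Walk (e.symm X₁) (e.symm X₂) := p.map φ.symm.toHom
  have hq : q.IsPath := SimpleGraph.Walk.map_isPath_of_injective φ.symm.toEquiv.injective hp
  have huniq : q = (w1.append w2.reverse).bypass := by
    have h0 := (rioGraph_isAcyclic hrip).path_unique ⟨q, hq⟩ ⟨(w1.append w2.reverse).bypass, hwb⟩
    exact congrArg Subtype.val h0
  have hZq : e.symm Z ∈ q.support := by
    show e.symm Z ∈ (p.map φ.symm.toHom).support
    rw [SimpleGraph.Walk.support_map]
    exact List.mem_map_of_mem hZ
  rw [huniq] at hZq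
  have := hwsupp _ (SimpleGraph.Walk.support_bypass_subset _ hZq)
  rwa [hval Z]
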